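/- Let (G,m) be a summable weighted graph, let ψ : V → {1,−1} with A = ψ⁻¹(1) and B = ψ⁻¹(−1) both nonempty, and let P_ψ : L²(G,m) → L²(G,m) be the bounded operator (P_ψ f)(v) = (1/m(v))·∑_{u : ψ(u) = ψ(v)} m(v,u)·f(u). Then the operator norm of P_ψ satisfies ‖P_ψ‖ ≤ κ(A,B). -/

import Mathlib

open MeasureTheory

/-- A summable weighted graph on a vertex set `V`. -/
structure SummableWeightedGraph (V : Type*) where
  m : V → V → ℝ
  symm : ∀ u v, m u v = m v u
  nonneg : ∀ u v, 0 ≤ m u v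
  loopless : ∀ v, m v v = 0
  summable : Summable fun p : V × V => m p.1 p.2
  noIsolated : ∀ v, 0 < ∑' u, m v u

namespace SummableWeightedGraph

variable {V : Type*} (G : SummableWeightedGraph V)

/-- The weight of a vertex. -/
noncomputable def deg (v : V) : ℝ := ∑' u, G.m v u

/-- The weight of a set of vertices. -/
noncomputable def setWeight (S : Set V) : ℝ := ∑' v : S, G.deg v

/-- The weight of the boundary of a set of vertices. -/
noncomputable def boundaryWeight (S : Set V) : ℝ :=
  ∑' p : ↥S × ↥Sᶜ, G.m p.1 p.2

/-- The Cheeger constant. -/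
noncomputable def cheegerConst : ℝ :=
  sInf { r : ℝ | ∃ S : Set V, S.Nonempty ∧ G.setWeight S ≤ G.setWeight Sᶜ ∧
    r = G.boundaryWeight S / G.setWeight S }

/-- The weighted counting measure on vertices. -/
noncomputable def measure [MeasurableSpace V] : Measure V :=
  Measure.sum fun v => ENNReal.ofReal (G.deg v) • Measure.dirac v

/-- The normalised Laplacian, characterised by its pointwise formula. -/
def IsLaplacian [MeasurableSpace V]
    (L : Lp ℝ 2 G.measure →L[ℝ] Lp ℝ 2 G.measure) : Prop :=
  ∀ f : Lp ℝ 2 G.measure, ∀ᵐ v ∂G.measure,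
    L f v = f v - (G.deg v)⁻¹ * ∑' u, G.m v u * f u

end SummableWeightedGraph

namespace SummableWeightedGraph

variable {V : Type*} (G : SummableWeightedGraph V)

/-- `p_S(v)`, the probability that the random walk moves from `v` into `S` in one step. -/
noncomputable def pProb (S : Set V) (v : V) : ℝ := (∑' u : S, G.m v u) / G.deg v

/-- `κ(A,B)` for a partition `V = A ⊔ B` into nonempty sets. -/
noncomputable def kappaPair (A B : Set V) : ℝ :=
  max (⨆ v : A, G.pProb A v) (⨆ w : B, G.pProb B w)

/-- The invariant `κ(G,m)`. -/
noncomputable def kappa : ℝ :=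
  sInf { r : ℝ | ∃ A B : Set V, A.Nonempty ∧ B.Nonempty ∧ Disjoint A B ∧
    A ∪ B = Set.univ ∧ r = G.kappaPair A B }

end SummableWeightedGraph

open scoped ENNReal NNReal

section Helpers

lemma coe_nnnorm_tsum_le {ι : Type*} (g : ι → ℝ) :
    (‖∑' i, g i‖₊ : ℝ≥0∞) ≤ ∑' i, (‖g i‖₊ : ℝ≥0∞) := by
  by_cases h : Summable g
  · have h1 : Summable fun i => ‖g i‖ := by
      simpa [Real.norm_eq_abs] using h.abs
    have h2 : Summable fun i => ‖g i‖₊ := by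
      rw [← NNReal.summable_coe]; exact h1
    rw [← ENNReal.coe_tsum h2]
    exact_mod_cast nnnorm_tsum_le h2
  · rw [tsum_eq_zero_of_not_summable h]; simp

lemma ennreal_cs {ι : Type*} [MeasurableSpace ι] [MeasurableSingletonClass ι] [Countable ι]
    (a b : ι → ℝ≥0∞) :
    (∑' i, a i * b i) ^ 2 ≤ (∑' i, a i ^ 2) * (∑' i, b i ^ 2) := by
  have hconj : Real.HolderConjugate 2 2 := ⟨by norm_num, by norm_num, by norm_num⟩
  have H := ENNReal.lintegral_mul_le_Lp_mul_Lq (Measure.count : Measure ι) hconj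
    (measurable_of_countable a).aemeasurable (measurable_of_countable b).aemeasurable
  simp only [lintegral_count, Pi.mul_apply] at H
  have H2 : (∑' i, a i * b i) ^ 2 ≤
      ((∑' i, a i ^ (2:ℝ)) ^ (1/(2:ℝ)) * (∑' i, b i ^ (2:ℝ)) ^ (1/(2:ℝ))) ^ 2 :=
    pow_le_pow_left' H 2
  calc (∑' i, a i * b i) ^ 2 ≤ _ := H2
    _ = (∑' i, a i ^ 2) * (∑' i, b i ^ 2) := by
        rw [mul_pow, ← ENNReal.rpow_natCast (_ ^ (1/(2:ℝ))) 2,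
          ← ENNReal.rpow_natCast (_ ^ (1/(2:ℝ))) 2,
          ← ENNReal.rpow_mul, ← ENNReal.rpow_mul]
        norm_num

namespace SummableWeightedGraph
variable {V : Type*} (G : SummableWeightedGraph V)

lemma deg_pos (v : V) : 0 < G.deg v := G.noIsolated v

lemma summable_m (v : V) : Summable fun u => G.m v u := G.summable.prod_factor v

lemma tsum_subtype_m_le (v : V) (S : Set V) : (∑' u : S, G.m v u) ≤ G.deg v := by
  rw [tsum_subtype]
  exact Summable.tsum_le_tsum (fun u => Set.indicator_le_self' (fun x _ => G.nonneg v x) u)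
    ((G.summable_m v).indicator S) (G.summable_m v)

lemma pProb_nonneg (S : Set V) (v : V) : 0 ≤ G.pProb S v :=
  div_nonneg (tsum_nonneg fun u => G.nonneg v _) (G.deg_pos v).le

lemma pProb_le_one (S : Set V) (v : V) : G.pProb S v ≤ 1 :=
  (div_le_one (G.deg_pos v)).2 (G.tsum_subtype_m_le v S)

lemma kappaPair_nonneg {A B : Set V} (hA : A.Nonempty) :
    0 ≤ G.kappaPair A B := by
  obtain ⟨v, hv⟩ := hA
  have hbdd : BddAbove (Set.range fun v : A => G.pProb A v) :=
    ⟨1, by rintro _ ⟨w, rfl⟩; exact G.pProb_le_one A w⟩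
  exact le_trans (le_trans (G.pProb_nonneg A v) (le_ciSup hbdd ⟨v, hv⟩)) (le_max_left _ _)

lemma tsum_same_le (ψ : V → ℝ) (hψ : ∀ v, ψ v = 1 ∨ ψ v = -1) (v : V) :
    (∑' u : {u | ψ u = ψ v}, G.m v u) ≤
      G.kappaPair (ψ ⁻¹' {1}) (ψ ⁻¹' {-1}) * G.deg v := by
  set A : Set V := ψ ⁻¹' {1}
  set B : Set V := ψ ⁻¹' {-1}
  have key : G.pProb {u | ψ u = ψ v} v ≤ G.kappaPair A B := by
    rcases hψ v with hv | hv
    · have hS : {u | ψ u = ψ v} = A := by ext u; simp [A, hv]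
      rw [hS]
      have hbdd : BddAbove (Set.range fun w : A => G.pProb A w) :=
        ⟨1, by rintro _ ⟨w, rfl⟩; exact G.pProb_le_one A w⟩
      exact le_trans (le_ciSup hbdd (⟨v, hv⟩ : A)) (le_max_left _ _)
    · have hS : {u | ψ u = ψ v} = B := by ext u; simp [B, hv]
      rw [hS]
      have hbdd : BddAbove (Set.range fun w : B => G.pProb B w) :=
        ⟨1, by rintro _ ⟨w, rfl⟩; exact G.pProb_le_one B w⟩
      exact le_trans (le_ciSup hbdd (⟨v, hv⟩ : B)) (le_max_right _ _)
  exact (div_le_iff₀ (G.deg_pos v)).1 key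

lemma lintegral_measure' [MeasurableSpace V] [MeasurableSingletonClass V]
    (g : V → ENNReal) :
    ∫⁻ v, g v ∂G.measure = ∑' v, ENNReal.ofReal (G.deg v) * g v := by
  simp [SummableWeightedGraph.measure, lintegral_sum_measure, lintegral_smul_measure,
    lintegral_dirac]

lemma tsum_Q_le (ψ : V → ℝ) (hψ : ∀ v, ψ v = 1 ∨ ψ v = -1)
    (hA : (ψ ⁻¹' {1}).Nonempty) (v : V) :
    (∑' u, if ψ u = ψ v then ENNReal.ofReal (G.m v u) else 0) ≤
      ENNReal.ofReal (G.kappaPair (ψ ⁻¹' {1}) (ψ ⁻¹' {-1})) * ENNReal.ofReal (G.deg v) := by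
  have h1 : (∑' u, if ψ u = ψ v then ENNReal.ofReal (G.m v u) else 0)
      = ENNReal.ofReal (∑' u : {u | ψ u = ψ v}, G.m v u) := by
    rw [ENNReal.ofReal_tsum_of_nonneg (fun u => G.nonneg v _)
      ((G.summable_m v).subtype _),
      tsum_subtype {u | ψ u = ψ v} (fun u => ENNReal.ofReal (G.m v u))]
    exact tsum_congr fun u => by
      by_cases h : ψ u = ψ v <;> simp [Set.indicator_apply, h, Set.mem_setOf_eq]
  rw [h1, ← ENNReal.ofReal_mul (G.kappaPair_nonneg hA)]
  exact ENNReal.ofReal_le_ofReal (G.tsum_same_le ψ hψ v)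

end SummableWeightedGraph

end Helpers

open SummableWeightedGraph in
/-- `‖Pψ‖ ≤ κ(A,B)` where `A = ψ⁻¹(1)`, `B = ψ⁻¹(-1)`. -/
theorem norm_Ppsi_le_kappaPair {V : Type*} [MeasurableSpace V] [MeasurableSingletonClass V]
    [Countable V] [Nonempty V] (G : SummableWeightedGraph V)
    (ψ : V → ℝ) (hψ : ∀ v, ψ v = 1 ∨ ψ v = -1)
    (hA : (ψ ⁻¹' {1}).Nonempty) (hB : (ψ ⁻¹' {-1}).Nonempty)
    (P : Lp ℝ 2 G.measure →L[ℝ] Lp ℝ 2 G.measure)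
    (hP : ∀ f : Lp ℝ 2 G.measure, ∀ᵐ v ∂G.measure,
      P f v = (G.deg v)⁻¹ * ∑' u : {u : V // ψ u = ψ v}, G.m v u * f u) :
    ‖P‖ ≤ G.kappaPair (ψ ⁻¹' {1}) (ψ ⁻¹' {-1}) := by
  classical
  have hκ0 : 0 ≤ G.kappaPair (ψ ⁻¹' {1}) (ψ ⁻¹' {-1}) := G.kappaPair_nonneg hA
  set κ : ℝ := G.kappaPair (ψ ⁻¹' {1}) (ψ ⁻¹' {-1}) with hκ
  set κ' : ℝ≥0∞ := ENNReal.ofReal κ with hκ'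
  set D : V → ℝ≥0∞ := fun v => ENNReal.ofReal (G.deg v) with hD
  set Q : V → V → ℝ≥0∞ := fun v u => if ψ u = ψ v then ENNReal.ofReal (G.m v u) else 0
    with hQ
  have hD0 : ∀ v, D v ≠ 0 := fun v => (ENNReal.ofReal_pos.2 (G.deg_pos v)).ne'
  have hDt : ∀ v, D v ≠ ⊤ := fun v => ENNReal.ofReal_ne_top
  have hQle : ∀ v, (∑' u, Q v u) ≤ κ' * D v := fun v => G.tsum_Q_le ψ hψ hA v
  have hQsymm : ∀ v u, Q v u = Q u v := by
    intro v u
    simp only [hQ, G.symm v u, eq_comm]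
  refine ContinuousLinearMap.opNorm_le_bound P hκ0 fun f => ?_
  set N : V → ℝ≥0∞ := fun u => (‖(f : V → ℝ) u‖₊ : ℝ≥0∞) with hN
  -- pointwise bound, a.e.
  have hae : ∀ᵐ v ∂G.measure,
      ((‖(P f : V → ℝ) v‖₊ : ℝ≥0∞)) ^ 2 ≤ κ' * (D v)⁻¹ * ∑' u, Q v u * N u ^ 2 := by
    filter_upwards [hP f] with v hv
    have step1 : ((‖(P f : V → ℝ) v‖₊ : ℝ≥0∞)) ≤ (D v)⁻¹ * ∑' u, Q v u * N u := by
      rw [hv]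
      have e1 : (‖(G.deg v)⁻¹ * ∑' u : {u : V // ψ u = ψ v}, G.m v u * (f : V → ℝ) u‖₊ : ℝ≥0∞)
          = (D v)⁻¹ * ↑‖∑' u : {u : V // ψ u = ψ v}, G.m v u * (f : V → ℝ) u‖₊ := by
        rw [nnnorm_mul, ENNReal.coe_mul,
          (by rw [← enorm_eq_nnnorm]; exact Real.enorm_eq_ofReal (inv_nonneg.2 (G.deg_pos v).le) :
            (‖(G.deg v)⁻¹‖₊ : ℝ≥0∞) = ENNReal.ofReal (G.deg v)⁻¹),
          ENNReal.ofReal_inv_of_pos (G.deg_pos v), hD]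
      rw [e1]
      refine mul_le_mul_right ?_ _
      calc (‖∑' u : {u : V // ψ u = ψ v}, G.m v u * (f : V → ℝ) u‖₊ : ℝ≥0∞)
          ≤ ∑' u : {u : V // ψ u = ψ v}, (‖G.m v u * (f : V → ℝ) u‖₊ : ℝ≥0∞) :=
            coe_nnnorm_tsum_le _
        _ = ∑' u : {u : V // ψ u = ψ v}, ENNReal.ofReal (G.m v u) * N u := by
            refine tsum_congr fun u => ?_
            rw [nnnorm_mul, ENNReal.coe_mul, (by rw [← enorm_eq_nnnorm]; exact Real.enorm_eq_ofReal (G.nonneg v u) :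
              (‖G.m v u‖₊ : ℝ≥0∞) = ENNReal.ofReal (G.m v u))]
        _ = ∑' u, Set.indicator {u | ψ u = ψ v}
              (fun u => ENNReal.ofReal (G.m v u) * N u) u :=
            tsum_subtype {u | ψ u = ψ v} (fun u => ENNReal.ofReal (G.m v u) * N u)
        _ = ∑' u, Q v u * N u := by
            refine tsum_congr fun u => ?_
            by_cases h : ψ u = ψ v <;>
              simp [Set.indicator_apply, h, Set.mem_setOf_eq, hQ]
    have step2 : (∑' u, Q v u * N u) ^ 2 ≤ (∑' u, Q v u) * (∑' u, Q v u * N u ^ 2) := by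
      have hcs := ennreal_cs (fun u => (Q v u) ^ ((1:ℝ)/2))
        (fun u => (Q v u) ^ ((1:ℝ)/2) * N u)
      have hab : ∀ u, (Q v u) ^ ((1:ℝ)/2) * ((Q v u) ^ ((1:ℝ)/2) * N u) = Q v u * N u := by
        intro u
        rw [← mul_assoc, ← ENNReal.rpow_add_of_nonneg ((1:ℝ)/2) ((1:ℝ)/2)
          (by norm_num) (by norm_num)]
        norm_num
      have ha2 : ∀ u, ((Q v u) ^ ((1:ℝ)/2)) ^ 2 = Q v u := by
        intro u
        rw [← ENNReal.rpow_natCast ((Q v u) ^ ((1:ℝ)/2)) 2, ← ENNReal.rpow_mul]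
        norm_num
      have hb2 : ∀ u, ((Q v u) ^ ((1:ℝ)/2) * N u) ^ 2 = Q v u * N u ^ 2 := by
        intro u
        rw [mul_pow, ha2]
      simp only [hab, ha2, hb2] at hcs
      exact hcs
    calc ((‖(P f : V → ℝ) v‖₊ : ℝ≥0∞)) ^ 2
        ≤ ((D v)⁻¹ * ∑' u, Q v u * N u) ^ 2 := pow_le_pow_left' step1 2
      _ = ((D v)⁻¹) ^ 2 * (∑' u, Q v u * N u) ^ 2 := mul_pow _ _ 2
      _ ≤ ((D v)⁻¹) ^ 2 * ((∑' u, Q v u) * (∑' u, Q v u * N u ^ 2)) :=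
          mul_le_mul_right step2 _
      _ ≤ ((D v)⁻¹) ^ 2 * ((κ' * D v) * (∑' u, Q v u * N u ^ 2)) :=
          mul_le_mul_right (mul_le_mul_left (hQle v) _) _
      _ = κ' * ((D v)⁻¹ * ((D v)⁻¹ * D v)) * (∑' u, Q v u * N u ^ 2) := by ring
      _ = κ' * (D v)⁻¹ * ∑' u, Q v u * N u ^ 2 := by
          rw [ENNReal.inv_mul_cancel (hD0 v) (hDt v), mul_one]
  -- integral bound
  have hint : (∫⁻ v, ((‖(P f : V → ℝ) v‖₊ : ℝ≥0∞)) ^ 2 ∂G.measure)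
      ≤ κ' ^ 2 * ∫⁻ v, N v ^ 2 ∂G.measure := by
    calc (∫⁻ v, ((‖(P f : V → ℝ) v‖₊ : ℝ≥0∞)) ^ 2 ∂G.measure)
        ≤ ∫⁻ v, κ' * (D v)⁻¹ * ∑' u, Q v u * N u ^ 2 ∂G.measure := lintegral_mono_ae hae
      _ = ∑' v, D v * (κ' * (D v)⁻¹ * ∑' u, Q v u * N u ^ 2) := G.lintegral_measure' _
      _ = ∑' v, κ' * ∑' u, Q v u * N u ^ 2 := by
          refine tsum_congr fun v => ?_
          calc D v * (κ' * (D v)⁻¹ * ∑' u, Q v u * N u ^ 2)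
              = (D v * (D v)⁻¹) * (κ' * ∑' u, Q v u * N u ^ 2) := by ring
            _ = κ' * ∑' u, Q v u * N u ^ 2 := by
                rw [ENNReal.mul_inv_cancel (hD0 v) (hDt v), one_mul]
      _ = κ' * ∑' v, ∑' u, Q v u * N u ^ 2 := ENNReal.tsum_mul_left
      _ = κ' * ∑' u, (∑' v, Q v u) * N u ^ 2 := by
          rw [ENNReal.tsum_comm]
          congr 1
          exact tsum_congr fun u => ENNReal.tsum_mul_right
      _ ≤ κ' * ∑' u, (κ' * D u) * N u ^ 2 := by
          refine mul_le_mul_right (ENNReal.tsum_le_tsum fun u => mul_le_mul_left ?_ _) _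
          calc (∑' v, Q v u) = ∑' v, Q u v := tsum_congr fun v => hQsymm v u
            _ ≤ κ' * D u := hQle u
      _ = κ' ^ 2 * ∑' u, D u * N u ^ 2 := by
          rw [← ENNReal.tsum_mul_left, ← ENNReal.tsum_mul_left]
          exact tsum_congr fun u => by ring
      _ = κ' ^ 2 * ∫⁻ v, N v ^ 2 ∂G.measure := by rw [G.lintegral_measure' fun v => N v ^ 2]
  -- from lintegral bound to norms
  have hsn : eLpNorm ((P f : V → ℝ)) 2 G.measure ≤ κ' * eLpNorm ((f : V → ℝ)) 2 G.measure := by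
    rw [eLpNorm_eq_lintegral_rpow_enorm_toReal (by norm_num) (by norm_num),
      eLpNorm_eq_lintegral_rpow_enorm_toReal (by norm_num) (by norm_num)]
    simp only [ENNReal.toReal_ofNat, ENNReal.rpow_two]
    calc (∫⁻ v, ((‖(P f : V → ℝ) v‖₊ : ℝ≥0∞)) ^ 2 ∂G.measure) ^ (1/(2:ℝ))
        ≤ (κ' ^ 2 * ∫⁻ v, N v ^ 2 ∂G.measure) ^ (1/(2:ℝ)) :=
          ENNReal.rpow_le_rpow hint (by norm_num)
      _ = κ' * (∫⁻ v, N v ^ 2 ∂G.measure) ^ (1/(2:ℝ)) := by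
          rw [ENNReal.mul_rpow_of_nonneg _ _ (by norm_num : (0:ℝ) ≤ 1/2)]
          congr 1
          rw [← ENNReal.rpow_natCast κ' 2, ← ENNReal.rpow_mul]
          norm_num
  have hne : κ' * eLpNorm ((f : V → ℝ)) 2 G.measure ≠ ⊤ :=
    ENNReal.mul_ne_top ENNReal.ofReal_ne_top (Lp.eLpNorm_ne_top f)
  calc ‖P f‖ = (eLpNorm ((P f : V → ℝ)) 2 G.measure).toReal := Lp.norm_def _
    _ ≤ (κ' * eLpNorm ((f : V → ℝ)) 2 G.measure).toReal := ENNReal.toReal_mono hne hsn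
    _ = κ * ‖f‖ := by
        rw [ENNReal.toReal_mul, hκ', ENNReal.toReal_ofReal hκ0, Lp.norm_def]
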